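/- Let G be a minimal non-sofic group and let M be a maximal normal subgroup of G. If M is finitely generated and residually finite, then M is contained in the center Z(G); moreover, in this case G is perfect and G/M is a finitely generated simple group, so G is a perfect central extension of a finitely generated simple group by M. -/

import Mathlib

/-- The normalized Hamming distance between two permutations of `Fin n`:
the number of points where they differ, divided by `n`. -/
noncomputable def permHammingDist {n : ℕ} (σ τ : Equiv.Perm (Fin n)) : ℝ :=
  ((Finset.univ.filter fun i => σ i ≠ τ i).card : ℝ) / n

/-- A group `G` is sofic if for every finite subset `F ⊆ G` and every `ε > 0` there exist
`n ≥ 1` and a map `θ` from `F` to `Sym(Fin n)` (extended to all of `G`) such that: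
(i) `θ` is an `ε`-approximate homomorphism on `F`;
(ii) `θ` almost sends the identity to the identity;
(iii) distinct elements of `F` are sent to permutations at Hamming distance at least `1/4`. -/
def IsSofic (G : Type*) [Group G] : Prop :=
  ∀ (F : Finset G) (ε : ℝ), 0 < ε →
    ∃ n : ℕ, 1 ≤ n ∧ ∃ θ : G → Equiv.Perm (Fin n),
      (∀ g h : G, g ∈ F → h ∈ F → g * h ∈ F →
        permHammingDist (θ g * θ h) (θ (g * h)) < ε) ∧
      ((1 : G) ∈ F → permHammingDist (θ 1) 1 < ε) ∧
      (∀ x y : G, x ∈ F → y ∈ F → x ≠ y → 1 / 4 ≤ permHammingDist (θ x) (θ y))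

/-- A group is minimal non-sofic if it is not sofic but every proper subgroup is sofic. -/
def IsMinimalNonSofic (G : Type*) [Group G] : Prop :=
  ¬ IsSofic G ∧ ∀ H : Subgroup G, H ≠ ⊤ → IsSofic H

/-- `M` is a maximal normal subgroup of `G`: a proper normal subgroup that is maximal
with respect to inclusion among proper normal subgroups. -/
def IsMaximalNormal {G : Type*} [Group G] (M : Subgroup G) : Prop :=
  M.Normal ∧ M ≠ ⊤ ∧ ∀ N : Subgroup G, N.Normal → N ≠ ⊤ → M ≤ N → N = M

/-- A group `M` is residually finite if every nontrivial element avoids some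
normal subgroup of finite index. -/
def IsResiduallyFinite (M : Type*) [Group M] : Prop :=
  ∀ m : M, m ≠ 1 → ∃ N : Subgroup M, N.Normal ∧ N.FiniteIndex ∧ m ∉ N

open Finset

lemma permHamming_congr {Q : Type*} [Fintype Q] [DecidableEq Q] {n N : ℕ}
    (e : Q × Fin n ≃ Fin N) (σ τ : Equiv.Perm (Q × Fin n)) :
    permHammingDist (e.permCongr σ) (e.permCongr τ)
      = ((∑ q : Q, (univ.filter fun x : Fin n => σ (q, x) ≠ τ (q, x)).card : ℕ) : ℝ) / N := by
  unfold permHammingDist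
  congr 2
  have h1 : (univ.filter fun i : Fin N => e.permCongr σ i ≠ e.permCongr τ i).card
      = (univ.filter fun p : Q × Fin n => σ p ≠ τ p).card := by
    refine (Finset.card_equiv e fun p => ?_).symm
    simp [Equiv.permCongr_apply]
  rw [h1, Finset.card_filter, Fintype.sum_prod_type]
  congr 1
  ext q
  rw [Finset.card_filter]

lemma isSofic_of_finiteIndex {G : Type*} [Group G] (K : Subgroup G) [K.FiniteIndex]
    (hK : IsSofic K) : IsSofic G := by
  classical
  intro F ε hε
  set Q := G ⧸ K with hQ
  let _ : Fintype Q := Fintype.ofFinite Q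
  -- the cocycle
  have hker : ∀ (g : G) (q : Q), (g • q).out⁻¹ * (g * q.out) ∈ K := by
    intro g q
    rw [← QuotientGroup.eq, QuotientGroup.out_eq']
    have : QuotientGroup.mk (g * q.out) = g • QuotientGroup.mk (s := K) q.out := by
      rw [← smul_eq_mul]
      exact (MulAction.Quotient.smul_mk K g q.out).symm
    rw [this, QuotientGroup.out_eq']
  let κ : G → Q → K := fun g q => ⟨(g • q).out⁻¹ * (g * q.out), hker g q⟩
  have hκ : ∀ g q, (κ g q : G) = (g • q).out⁻¹ * (g * q.out) := fun _ _ => rfl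
  have hcoc : ∀ g h q, κ g (h • q) * κ h q = κ (g * h) q := by
    intro g h q
    apply Subtype.ext
    push_cast [hκ]
    rw [← mul_smul]
    group
  have hone : ∀ q, κ 1 q = 1 := by
    intro q
    apply Subtype.ext
    rw [hκ, one_smul, one_mul, inv_mul_cancel]
    rfl
  have hinj : ∀ g g' q, g • q = g' • q → κ g q = κ g' q → g = g' := by
    intro g g' q hq hk
    have := congrArg (Subtype.val) hk
    rw [hκ, hκ, hq] at this
    exact mul_right_cancel (mul_left_cancel this)
  let E : Finset K := insert 1 ((F ×ˢ (univ : Finset Q)).image fun p => κ p.1 p.2)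
  have hmemE : ∀ g ∈ F, ∀ q, κ g q ∈ E := by
    intro g hg q
    exact Finset.mem_insert_of_mem (Finset.mem_image.2 ⟨(g, q), Finset.mem_product.2 ⟨hg, mem_univ _⟩, rfl⟩)
  obtain ⟨n, hn, θK, hb1, hb2, hb3⟩ := hK E ε hε
  have hn' : (0 : ℝ) < n := by exact_mod_cast hn
  set m := Fintype.card Q with hm
  have hm1 : 1 ≤ m := Fintype.card_pos
  have hN' : (0 : ℝ) < (m * n : ℕ) := by positivity
  refine ⟨m * n, Nat.one_le_iff_ne_zero.2 (by positivity), ?_⟩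
  let e : Q × Fin n ≃ Fin (m * n) :=
    (Equiv.prodCongr (Fintype.equivFin Q) (Equiv.refl _)).trans finProdFinEquiv
  let ρ : G → Equiv.Perm (Q × Fin n) := fun g =>
    Equiv.prodShear (MulAction.toPerm g) (fun q => θK (κ g q))
  have hρ : ∀ g (p : Q × Fin n), ρ g p = (g • p.1, θK (κ g p.1) p.2) := fun _ _ => rfl
  refine ⟨fun g => e.permCongr (ρ g), ?_, ?_, ?_⟩
  · -- approximate multiplicativity
    intro g h hg hh hgh
    have hmul : e.permCongr (ρ g) * e.permCongr (ρ h) = e.permCongr (ρ g * ρ h) := by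
      ext i
      simp [Equiv.permCongr_apply, Equiv.Perm.mul_apply]
    rw [hmul, permHamming_congr]
    rw [div_lt_iff₀ hN']
    have key : ∀ q : Q,
        ((univ.filter fun x : Fin n => (ρ g * ρ h) (q, x) ≠ ρ (g * h) (q, x)).card : ℝ) < ε * n := by
      intro q
      have hfe : (univ.filter fun x : Fin n => (ρ g * ρ h) (q, x) ≠ ρ (g * h) (q, x))
          = (univ.filter fun x : Fin n =>
              (θK (κ g (h • q)) * θK (κ h q)) x ≠ θK (κ (g * h) q) x) := by
        apply Finset.filter_congr
        intro x _
        simp only [Equiv.Perm.mul_apply, hρ, ne_eq, ← mul_smul, Prod.mk.injEq,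
          eq_self_iff_true, true_and]
      rw [hfe]
      have := hb1 (κ g (h • q)) (κ h q) (hmemE g hg _) (hmemE h hh _)
        (by rw [hcoc]; exact hmemE _ hgh q)
      unfold permHammingDist at this
      rw [div_lt_iff₀ hn'] at this
      rwa [hcoc] at this
    calc ((∑ q : Q, (univ.filter fun x : Fin n =>
            (ρ g * ρ h) (q, x) ≠ ρ (g * h) (q, x)).card : ℕ) : ℝ)
        = ∑ q : Q, ((univ.filter fun x : Fin n =>
            (ρ g * ρ h) (q, x) ≠ ρ (g * h) (q, x)).card : ℝ) := by push_cast; ring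
      _ < ∑ _q : Q, ε * n := Finset.sum_lt_sum_of_nonempty univ_nonempty (fun q _ => key q)
      _ = m * (ε * n) := by rw [Finset.sum_const, card_univ, nsmul_eq_mul]
      _ = ε * (m * n : ℕ) := by push_cast; ring
  · -- identity
    intro h1F
    have h1' : (1 : Equiv.Perm (Fin (m * n))) = e.permCongr 1 := by
      ext i
      simp [Equiv.permCongr_apply]
    rw [h1', permHamming_congr, div_lt_iff₀ hN']
    have key : ∀ q : Q,
        ((univ.filter fun x : Fin n => ρ 1 (q, x) ≠ (1 : Equiv.Perm (Q × Fin n)) (q, x)).card : ℝ)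
          < ε * n := by
      intro q
      have hfe : (univ.filter fun x : Fin n => ρ 1 (q, x) ≠ (1 : Equiv.Perm (Q × Fin n)) (q, x))
          = (univ.filter fun x : Fin n => θK (κ 1 q) x ≠ (1 : Equiv.Perm (Fin n)) x) := by
        apply Finset.filter_congr
        intro x _
        simp only [hρ, one_smul, ne_eq, Prod.mk.injEq, eq_self_iff_true, true_and,
          Equiv.Perm.one_apply]
      rw [hfe, hone]
      have := hb2 (Finset.mem_insert_self 1 _)
      unfold permHammingDist at this
      rw [div_lt_iff₀ hn'] at this
      exact this
    calc ((∑ q : Q, (univ.filter fun x : Fin n =>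
            ρ 1 (q, x) ≠ (1 : Equiv.Perm (Q × Fin n)) (q, x)).card : ℕ) : ℝ)
        = ∑ q : Q, ((univ.filter fun x : Fin n =>
            ρ 1 (q, x) ≠ (1 : Equiv.Perm (Q × Fin n)) (q, x)).card : ℝ) := by push_cast; ring
      _ < ∑ _q : Q, ε * n := Finset.sum_lt_sum_of_nonempty univ_nonempty (fun q _ => key q)
      _ = m * (ε * n) := by rw [Finset.sum_const, card_univ, nsmul_eq_mul]
      _ = ε * (m * n : ℕ) := by push_cast; ring
  · -- separation
    intro x y hx hy hxy
    rw [permHamming_congr, le_div_iff₀ hN']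
    have key : ∀ q : Q,
        (n : ℝ) / 4 ≤ (univ.filter fun x' : Fin n => ρ x (q, x') ≠ ρ y (q, x')).card := by
      intro q
      by_cases hq : x • q = y • q
      · have hfe : (univ.filter fun x' : Fin n => ρ x (q, x') ≠ ρ y (q, x'))
            = (univ.filter fun x' : Fin n => θK (κ x q) x' ≠ θK (κ y q) x') := by
          apply Finset.filter_congr
          intro x' _
          simp only [hρ, hq, ne_eq, Prod.mk.injEq, eq_self_iff_true, true_and]
        rw [hfe]
        have hne : κ x q ≠ κ y q := fun hc => hxy (hinj x y q hq hc)
        have := hb3 (κ x q) (κ y q) (hmemE x hx q) (hmemE y hy q) hne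
        unfold permHammingDist at this
        rw [le_div_iff₀ hn'] at this
        linarith
      · have hfe : (univ.filter fun x' : Fin n => ρ x (q, x') ≠ ρ y (q, x'))
            = (univ : Finset (Fin n)) := by
          apply Finset.filter_true_of_mem
          intro x' _
          intro hc
          exact hq (congrArg Prod.fst hc)
        rw [hfe, card_univ, Fintype.card_fin]
        linarith
    calc (1 : ℝ) / 4 * (m * n : ℕ)
        = ∑ _q : Q, (n : ℝ) / 4 := by
          rw [Finset.sum_const, card_univ, nsmul_eq_mul]; push_cast; ring
      _ ≤ ∑ q : Q, ((univ.filter fun x' : Fin n => ρ x (q, x') ≠ ρ y (q, x')).card : ℝ) :=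
          Finset.sum_le_sum (fun q _ => key q)
      _ = ((∑ q : Q, (univ.filter fun x' : Fin n => ρ x (q, x') ≠ ρ y (q, x')).card : ℕ) : ℝ) := by
          push_cast; ring

lemma finite_monoidHom_of_fg {M P : Type*} [Group M] [Group P] (hfg : Group.FG M)
    [Finite P] : Finite (M →* P) := by
  obtain ⟨S, hScl, hSfin⟩ := Group.fg_iff.mp hfg
  haveI : Finite ↥S := hSfin.to_subtype
  have hinj : Function.Injective (fun f : M →* P => (fun s : S => f s)) := by
    intro f g hfg'
    refine MonoidHom.eq_of_eqOn_dense hScl ?_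
    intro s hs
    exact congrFun hfg' ⟨s, hs⟩
  exact Finite.of_injective _ hinj

lemma simple_quotient_of_maximal {G : Type*} [Group G] (N : Subgroup G) [N.Normal]
    (hne : N ≠ ⊤) (hmax : ∀ H : Subgroup G, H.Normal → N ≤ H → H = N ∨ H = ⊤) :
    IsSimpleGroup (G ⧸ N) := by
  have hnt : Nontrivial (G ⧸ N) := by
    obtain ⟨g, hg⟩ : ∃ g, g ∉ N := by
      by_contra hc
      push_neg at hc
      exact hne (Subgroup.eq_top_iff' N |>.2 hc)
    exact ⟨⟨QuotientGroup.mk g, 1, by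
      rw [ne_eq, QuotientGroup.eq_one_iff]
      exact hg⟩⟩
  refine ⟨fun H hH => ?_⟩
  have hH' : (H.comap (QuotientGroup.mk' N)).Normal := hH.comap _
  have hle : N ≤ H.comap (QuotientGroup.mk' N) := by
    intro n hn
    rw [Subgroup.mem_comap]
    have : (QuotientGroup.mk' N) n = 1 := (QuotientGroup.eq_one_iff n).2 hn
    rw [this]
    exact one_mem H
  rcases hmax _ hH' hle with h | h
  · left
    have hmap := Subgroup.map_comap_eq_self_of_surjective
      (QuotientGroup.mk'_surjective N) (H := H)
    rw [← hmap, h, eq_bot_iff]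
    rintro x ⟨n, hn, rfl⟩
    rw [Subgroup.mem_bot]
    exact (QuotientGroup.eq_one_iff n).2 hn
  · right
    have hmap := Subgroup.map_comap_eq_self_of_surjective
      (QuotientGroup.mk'_surjective N) (H := H)
    rw [← hmap, h]
    exact Subgroup.map_top_of_surjective _ (QuotientGroup.mk'_surjective N)

lemma finite_of_simple_comm {A : Type*} [CommGroup A] [IsSimpleGroup A] : Finite A := by
  obtain ⟨g, hg⟩ := IsCyclic.exists_generator (α := A)
  by_cases hfin : IsOfFinOrder g
  · have h1 : (Subgroup.zpowers g : Set A).Finite := finite_zpowers.2 hfin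
    have h2 : (Set.univ : Set A) ⊆ (Subgroup.zpowers g : Set A) := fun x _ => hg x
    exact Set.finite_univ_iff.1 (h1.subset h2)
  · exfalso
    rcases (Subgroup.normal_of_comm (Subgroup.zpowers (g * g))).eq_bot_or_eq_top with hb | ht
    · rw [Subgroup.zpowers_eq_bot] at hb
      exact hfin (isOfFinOrder_iff_pow_eq_one.2 ⟨2, by omega, by rw [pow_two]; exact hb⟩)
    · have hmem : g ∈ Subgroup.zpowers (g * g) := ht ▸ Subgroup.mem_top g
      obtain ⟨k, hk⟩ := Subgroup.mem_zpowers_iff.1 hmem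
      have hinj := injective_zpow_iff_not_isOfFinOrder.2 hfin
      have hgg : g * g = g ^ (2 : ℤ) := by
        rw [show (2 : ℤ) = 1 + 1 by norm_num, zpow_add, zpow_one]
      have h2k : g ^ (2 * k) = g ^ (1 : ℤ) := by
        calc g ^ (2 * k) = (g ^ (2 : ℤ)) ^ k := by rw [zpow_mul]
          _ = (g * g) ^ k := by rw [hgg]
          _ = g := hk
          _ = g ^ (1 : ℤ) := (zpow_one g).symm
      have := hinj h2k
      omega

lemma exists_finiteIndex_of_nontrivial_fg_comm {A : Type*} [CommGroup A] [Nontrivial A]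
    (hfg : Group.FG A) : ∃ B : Subgroup A, B ≠ ⊤ ∧ B.FiniteIndex := by
  haveI : AddGroup.FG (Additive A) := GroupFG.iff_add_fg.mp hfg
  haveI : Module.Finite ℤ (Additive A) := Module.Finite.iff_addGroup_fg.mpr ‹_›
  haveI : IsNoetherian ℤ (Additive A) := isNoetherian_of_isNoetherianRing_of_finite ℤ _
  have hwf : WellFounded ((· > ·) : Subgroup A → Subgroup A → Prop) := by
    let f : Subgroup A ≃o Submodule ℤ (Additive A) :=
      (Subgroup.toAddSubgroup).trans (AddSubgroup.toIntSubmodule)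
    have h1 : WellFounded ((· > ·) : Submodule ℤ (Additive A) → _ → Prop) :=
      (IsNoetherian.wellFoundedGT ‹_›).wf
    exact Subrelation.wf (fun {a b} h => (f.lt_iff_lt.2 h : f b < f a)) (InvImage.wf f h1)
  have hco : IsCoatomic (Subgroup A) := isCoatomic_of_orderTop_gt_wellFounded hwf
  rcases hco.eq_top_or_exists_le_coatom ⊥ with hb | ⟨B, hB, -⟩
  · exact absurd hb bot_ne_top
  · have hsim : IsSimpleGroup (A ⧸ B) := by
      refine simple_quotient_of_maximal B hB.1 fun H _ hle => ?_
      rcases eq_or_lt_of_le hle with h | h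
      · exact Or.inl h.symm
      · exact Or.inr (hB.2 H h)
    haveI : Finite (A ⧸ B) := finite_of_simple_comm
    exact ⟨B, hB.1, Subgroup.finiteIndex_of_finite_quotient⟩

lemma fg_of_minimalNonSofic {G : Type*} [Group G] (hG : IsMinimalNonSofic G) : Group.FG G := by
  classical
  by_contra hfg
  apply hG.1
  intro F ε hε
  set H := Subgroup.closure (F : Set G) with hHdef
  have hne : H ≠ ⊤ := fun h => hfg (Group.fg_iff.2 ⟨F, h, F.finite_toSet⟩)
  obtain ⟨n, hn, θ', h1, h2, h3⟩ := hG.2 H hne (F.subtype (· ∈ H)) ε hε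
  have hmem : ∀ g ∈ F, g ∈ H := fun g hg => Subgroup.subset_closure hg
  set θ : G → Equiv.Perm (Fin n) := fun g => if hg : g ∈ H then θ' ⟨g, hg⟩ else 1 with hθdef
  have hθ : ∀ (g : G) (hg : g ∈ H), θ g = θ' ⟨g, hg⟩ := fun g hg => dif_pos hg
  refine ⟨n, hn, θ, ?_, ?_, ?_⟩
  · intro g h hg hh hgh
    rw [hθ g (hmem g hg), hθ h (hmem h hh), hθ _ (hmem _ hgh)]
    have he : (⟨g * h, hmem _ hgh⟩ : H) = ⟨g, hmem g hg⟩ * ⟨h, hmem h hh⟩ := rfl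
    rw [he]
    exact h1 _ _ (Finset.mem_subtype.2 hg) (Finset.mem_subtype.2 hh)
      (Finset.mem_subtype.2 hgh)
  · intro h1F
    rw [hθ 1 (one_mem H)]
    have he : (⟨1, one_mem H⟩ : H) = 1 := rfl
    rw [he]
    exact h2 (Finset.mem_subtype.2 h1F)
  · intro x y hx hy hxy
    rw [hθ x (hmem x hx), hθ y (hmem y hy)]
    exact h3 _ _ (Finset.mem_subtype.2 hx) (Finset.mem_subtype.2 hy)
      (fun hc => hxy (congrArg Subtype.val hc))

/-- If `G` is minimal non-sofic and `M` is a finitely generated residually finite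
maximal normal subgroup, then `M` is central; moreover `G` is perfect and `G/M`
is a finitely generated simple group, so `G` is a perfect central extension of a
finitely generated simple group by `M`. -/
theorem minimalNonSofic_resFin_maxNormal_central (G : Type*) [Group G]
    (hG : IsMinimalNonSofic G) (M : Subgroup G) (hmax : IsMaximalNormal M)
    (hfg : Group.FG M) (hrf : IsResiduallyFinite M) :
    M ≤ Subgroup.center G ∧ commutator G = ⊤ ∧
      ∃ _ : M.Normal, Group.FG (G ⧸ M) ∧ IsSimpleGroup (G ⧸ M) := by
  classical
  haveI hMn : M.Normal := hmax.1
  haveI hfgG : Group.FG G := fg_of_minimalNonSofic hG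
  have hnofi : ∀ K : Subgroup G, K.FiniteIndex → K = ⊤ := by
    intro K hKfi
    by_contra hKne
    exact hG.1 (@isSofic_of_finiteIndex G _ K hKfi (hG.2 K hKne))
  -- centrality
  have hcenter : M ≤ Subgroup.center G := by
    by_contra hc
    rw [SetLike.le_def] at hc
    push_neg at hc
    obtain ⟨m, hmM, hmc⟩ := hc
    rw [Subgroup.mem_center_iff] at hmc
    push_neg at hmc
    obtain ⟨g, hg⟩ := hmc
    have hcmem : g * m * g⁻¹ * m⁻¹ ∈ M := mul_mem (hMn.conj_mem m hmM g) (inv_mem hmM)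
    set cM : ↥M := ⟨g * m * g⁻¹ * m⁻¹, hcmem⟩ with hcMdef
    have hcne : cM ≠ 1 := by
      intro h
      apply hg
      have h' : g * m * g⁻¹ * m⁻¹ = 1 := congrArg Subtype.val h
      rw [mul_inv_eq_one] at h'
      calc g * m = g * m * g⁻¹ * g := by group
        _ = m * g := by rw [h']
    obtain ⟨N, hNnorm, hNfi, hcN⟩ := hrf cM hcne
    haveI := hNnorm
    haveI := hNfi
    haveI : Finite (↥M →* Equiv.Perm (↥M ⧸ N)) := finite_monoidHom_of_fg hfg
    set K : Subgroup ↥M := ⨅ f : ↥M →* Equiv.Perm (↥M ⧸ N), f.ker with hKdef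
    haveI hKfi : K.FiniteIndex := Subgroup.finiteIndex_iInf fun f => inferInstance
    have hKnorm : K.Normal := by
      constructor
      intro x hx g'
      rw [Subgroup.mem_iInf] at hx ⊢
      intro f
      exact (MonoidHom.normal_ker f).conj_mem x (hx f) g'
    have hcK : cM ∉ K := by
      intro hmem
      have h0 : cM ∈ (MulAction.toPermHom ↥M (↥M ⧸ N)).ker := Subgroup.mem_iInf.1 hmem _
      rw [MonoidHom.mem_ker] at h0
      have happ := Equiv.ext_iff.1 h0 (QuotientGroup.mk (1 : ↥M))
      simp only [MulAction.toPermHom_apply, MulAction.toPerm_apply, Equiv.Perm.coe_one,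
        id_eq] at happ
      rw [MulAction.Quotient.smul_mk, smul_eq_mul, mul_one] at happ
      exact hcN ((QuotientGroup.eq_one_iff cM).1 happ)
    have hcomap : ∀ e : ↥M ≃* ↥M, K.comap (e : ↥M →* ↥M) = K := by
      intro e
      rw [hKdef, Subgroup.comap_iInf]
      simp_rw [MonoidHom.comap_ker]
      apply le_antisymm
      · refine le_iInf fun f => iInf_le_of_le (f.comp (e.symm : ↥M →* ↥M)) (le_of_eq ?_)
        congr 1
        ext x
        simp
      · exact le_iInf fun f => iInf_le_of_le (f.comp (e : ↥M →* ↥M)) (le_of_eq rfl)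
    have hmap : ∀ e : ↥M ≃* ↥M, K.map (e : ↥M →* ↥M) = K := by
      intro e
      rw [Subgroup.map_equiv_eq_comap_symm]
      exact hcomap e.symm
    set ψ : G → Equiv.Perm (↥M ⧸ K) := fun x =>
      (QuotientGroup.congr K K (MulAut.conjNormal x : ↥M ≃* ↥M) (hmap _)).toEquiv with hψdef
    have hψ : ∀ (x : G) (y : ↥M),
        ψ x (QuotientGroup.mk y) = QuotientGroup.mk (MulAut.conjNormal x y) :=
      fun x y => QuotientGroup.congr_mk K K _ (hmap _) y
    set φ : G →* Equiv.Perm (↥M ⧸ K) := MonoidHom.mk' ψ (by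
      intro a b
      ext q
      induction q using QuotientGroup.induction_on with
      | H x =>
        rw [hψ, Equiv.Perm.mul_apply, hψ, hψ, map_mul, MulAut.mul_apply]) with hφdef
    haveI : Finite (↥M ⧸ K) := K.finite_quotient_of_finiteIndex
    have hφker : φ.ker = ⊤ := hnofi φ.ker inferInstance
    set m' : ↥M := ⟨m, hmM⟩ with hm'def
    have hgker : g ∈ φ.ker := hφker ▸ Subgroup.mem_top g
    have hφg : φ g = 1 := MonoidHom.mem_ker.1 hgker
    have heq : (QuotientGroup.mk (MulAut.conjNormal g m') : ↥M ⧸ K) = QuotientGroup.mk m' := by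
      calc (QuotientGroup.mk (MulAut.conjNormal g m') : ↥M ⧸ K)
          = ψ g (QuotientGroup.mk m') := (hψ g m').symm
        _ = φ g (QuotientGroup.mk m') := rfl
        _ = QuotientGroup.mk m' := by rw [hφg]; rfl
    rw [eq_comm, QuotientGroup.eq] at heq
    have h2 : m' * (m'⁻¹ * MulAut.conjNormal g m') * m'⁻¹ ∈ K :=
      hKnorm.conj_mem _ heq m'
    have hcm : cM = m' * (m'⁻¹ * MulAut.conjNormal g m') * m'⁻¹ := by
      apply Subtype.ext
      push_cast [MulAut.conjNormal_apply]
      simp only [hcMdef, hm'def]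
      group
    exact hcK (hcm ▸ h2)
  -- perfectness
  have hsurj : Function.Surjective (Abelianization.of (G := G)) :=
    fun y => Quotient.inductionOn y fun z => ⟨z, rfl⟩
  have hperf : commutator G = ⊤ := by
    by_contra hcomm
    haveI hnt : Nontrivial (Abelianization G) := by
      obtain ⟨x, hx⟩ : ∃ x, x ∉ commutator G := by
        by_contra hcc
        push_neg at hcc
        exact hcomm ((Subgroup.eq_top_iff' _).2 hcc)
      refine ⟨⟨Abelianization.of x, 1, ?_⟩⟩
      show ¬(QuotientGroup.mk x : G ⧸ commutator G) = 1
      rw [QuotientGroup.eq_one_iff]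
      exact hx
    have hfgA : Group.FG (Abelianization G) := Group.fg_of_surjective hsurj
    obtain ⟨B, hBne, hBfi⟩ := exists_finiteIndex_of_nontrivial_fg_comm hfgA
    have hKfi : (B.comap Abelianization.of).FiniteIndex := by
      constructor
      rw [B.index_comap_of_surjective hsurj]
      exact hBfi.index_ne_zero
    have htop := hnofi _ hKfi
    apply hBne
    calc B = (B.comap Abelianization.of).map Abelianization.of :=
          (Subgroup.map_comap_eq_self_of_surjective hsurj B).symm
      _ = (⊤ : Subgroup G).map Abelianization.of := by rw [htop]
      _ = ⊤ := Subgroup.map_top_of_surjective _ hsurj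
  refine ⟨hcenter, hperf, hMn, Group.fg_of_surjective (QuotientGroup.mk'_surjective M), ?_⟩
  refine simple_quotient_of_maximal M hmax.2.1 fun H hn hle => ?_
  by_cases h : H = ⊤
  · exact Or.inr h
  · exact Or.inl (hmax.2.2 H hn h hle)
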